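/- Let k be a field and m an integer with m ≥ 4. In k[x_1,…,x_m,z,T] let Q = I_{2,1,m−1} + I_{2,2,m} + (T x_2, T x_3, …, T x_{m−1}) + (zT − x_1x_m), and set S = k[x_1,…,x_m,z,T]/Q. Then the image of z in S is a non-zero-divisor of S, and S/(z) is isomorphic as a k-algebra to k[x_1,…,x_{m+1}]/(I_{2,1,m} + I_{2,2,m+1}), which is the Stanley–Reisner ring k[Δ(2,m+1)] of the boundary of the 2-dimensional cyclic polytope (an (m+1)-gon). -/

import Mathlib

/-- The variable `x_t` (1-indexed, for `1 ≤ t ≤ n`) of the polynomial ring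
`k[x_1, …, x_n]`, realized as `MvPolynomial (Fin n) k`. -/
noncomputable def Xv (k : Type*) [Field k] (n t : ℕ) : MvPolynomial (Fin n) k :=
  if h : 1 ≤ t ∧ t ≤ n then MvPolynomial.X ⟨t - 1, by omega⟩ else 0

/-- The ideal `I_{a,p,q}` of `k[x_1, …, x_n]`, generated by the squarefree monomials
`x_{t_1} ⋯ x_{t_a}` with `p ≤ t_1 < t_2 < ⋯ < t_a ≤ q` and `t_{j+1} ≥ t_j + 2`. -/
noncomputable def idealI (k : Type*) [Field k] (n a p q : ℕ) :
    Ideal (MvPolynomial (Fin n) k) :=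
  Ideal.span { f | ∃ t : ℕ → ℕ, p ≤ t 0 ∧ t (a - 1) ≤ q ∧
    (∀ j, j + 1 < a → t j + 2 ≤ t (j + 1)) ∧
    f = ∏ j ∈ Finset.range a, Xv k n (t j) }

set_option synthInstance.maxHeartbeats 1000000
set_option maxHeartbeats 1000000

open MvPolynomial

namespace Unproj

variable (k : Type*) [Field k] (m : ℕ)

/-- nat-indexed access to an exponent vector -/
def vOf (d : Fin (m + 2) →₀ ℕ) (t : ℕ) : ℕ := if h : t < m + 2 then d ⟨t, h⟩ else 0

lemma vOf_fin (d : Fin (m+2) →₀ ℕ) (i : Fin (m+2)) : d i = vOf m d i := by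
  simp [vOf, i.2]

lemma finsupp_ext {f g : Fin (m+2) →₀ ℕ} (h : ∀ t, vOf m f t = vOf m g t) : f = g :=
  Finsupp.ext fun i => by rw [vOf_fin, vOf_fin]; exact h i

lemma vOf_add (f g : Fin (m+2) →₀ ℕ) (t : ℕ) :
    vOf m (f + g) t = vOf m f t + vOf m g t := by
  unfold vOf; split <;> simp [Finsupp.add_apply]

lemma vOf_sub (f g : Fin (m+2) →₀ ℕ) (t : ℕ) :
    vOf m (f - g) t = vOf m f t - vOf m g t := by
  unfold vOf; split <;> simp [Finsupp.tsub_apply]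

lemma vOf_single (s : ℕ) (hs : s < m + 2) (c : ℕ) (t : ℕ) :
    vOf m (Finsupp.single (⟨s, hs⟩ : Fin (m+2)) c) t = if t = s then c else 0 := by
  unfold vOf
  split
  · rw [Finsupp.single_apply]
    simp [Fin.ext_iff, eq_comm]
  · rw [if_neg (by omega)]

/-- index of x_1 -/
def aI : Fin (m+2) := ⟨0, by omega⟩
/-- index of x_m -/
def bI : Fin (m+2) := ⟨m - 1, by omega⟩
/-- index of z -/
def zI : Fin (m+2) := ⟨m, by omega⟩
/-- index of T -/
def tI : Fin (m+2) := ⟨m + 1, by omega⟩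

def eMin (d : Fin (m+2) →₀ ℕ) : ℕ := min (vOf m d 0) (vOf m d (m-1))

noncomputable def red (d : Fin (m+2) →₀ ℕ) : Fin (m+2) →₀ ℕ :=
  d + Finsupp.single (zI m) (eMin m d) + Finsupp.single (tI m) (eMin m d)
    - Finsupp.single (aI m) (eMin m d) - Finsupp.single (bI m) (eMin m d)

lemma vOf_red (d : Fin (m+2) →₀ ℕ) (t : ℕ) :
    vOf m (red m d) t =
      (vOf m d t + (if t = m then eMin m d else 0) + (if t = m + 1 then eMin m d else 0))
        - (if t = 0 then eMin m d else 0) - (if t = m - 1 then eMin m d else 0) := by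
  simp only [red, vOf_sub, vOf_add, zI, tI, aI, bI, vOf_single]

/-- "bad pair" predicate: contains a non-edge monomial among the x's -/
def BadP (d : Fin (m+2) →₀ ℕ) : Prop :=
  ∃ i j : ℕ, i + 2 ≤ j ∧ j ≤ m - 1 ∧ ¬(i = 0 ∧ j = m - 1) ∧ 0 < vOf m d i ∧ 0 < vOf m d j

/-- contains some middle variable x_2 … x_{m-1} -/
def MidP (d : Fin (m+2) →₀ ℕ) : Prop := ∃ i : ℕ, 1 ≤ i ∧ i ≤ m - 2 ∧ 0 < vOf m d i

def Bad (d : Fin (m+2) →₀ ℕ) : Prop :=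
  BadP m d ∨ (0 < vOf m d (m+1) ∧ MidP m d)

open Classical in
/-- normal form of a monomial -/
noncomputable def nmono (d : Fin (m+2) →₀ ℕ) : MvPolynomial (Fin (m+2)) k :=
  if Bad m d then 0 else monomial (red m d) 1

/-- normal form, as a `k`-linear map -/
noncomputable def NF : MvPolynomial (Fin (m+2)) k →ₗ[k] MvPolynomial (Fin (m+2)) k :=
  (MvPolynomial.basisMonomials (Fin (m+2)) k).constr ℕ (nmono k m)

lemma NF_monomial (d : Fin (m+2) →₀ ℕ) (c : k) :
    NF k m (monomial d c) = c • nmono k m d := by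
  have h : (monomial d c : MvPolynomial (Fin (m+2)) k)
      = c • ((MvPolynomial.basisMonomials (Fin (m+2)) k) d) := by
    simp [coe_basisMonomials, smul_monomial]
  rw [h, map_smul]
  simp only [NF]
  rw [Module.Basis.constr_basis]

end Unproj

namespace Unproj
variable (k : Type*) [Field k] (m : ℕ)

lemma badP_mono {d : Fin (m+2) →₀ ℕ} (f : Fin (m+2) →₀ ℕ) (h : BadP m d) :
    BadP m (d + f) := by
  obtain ⟨i, j, h2, hj, hne, hi0, hj0⟩ := h
  refine ⟨i, j, h2, hj, hne, ?_, ?_⟩ <;> rw [vOf_add] <;> omega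

lemma midP_mono {d : Fin (m+2) →₀ ℕ} (f : Fin (m+2) →₀ ℕ) (h : MidP m d) :
    MidP m (d + f) := by
  obtain ⟨i, h1, h2, hi⟩ := h
  refine ⟨i, h1, h2, ?_⟩; rw [vOf_add]; omega

lemma badL (hm : 4 ≤ m) (d : Fin (m+2) →₀ ℕ) :
    Bad m (d + (Finsupp.single (zI m) 1 + Finsupp.single (tI m) 1)) ↔
      BadP m d ∨ MidP m d := by
  unfold Bad BadP MidP
  simp only [zI, tI, vOf_add, vOf_single]
  constructor
  · rintro (⟨i, j, h2, hj, hne, hi0, hj0⟩ | ⟨-, i, h1, h2, hi⟩)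
    · have hi0' : 0 < vOf m d i := by split_ifs at hi0 <;> first | exact (‹False›).elim | omega
      have hj0' : 0 < vOf m d j := by split_ifs at hj0 <;> first | exact (‹False›).elim | omega
      exact Or.inl ⟨i, j, h2, hj, hne, hi0', hj0'⟩
    · have hi' : 0 < vOf m d i := by split_ifs at hi <;> first | exact (‹False›).elim | omega
      exact Or.inr ⟨i, h1, h2, hi'⟩
  · rintro (⟨i, j, h2, hj, hne, hi0, hj0⟩ | ⟨i, h1, h2, hi⟩)
    · exact Or.inl ⟨i, j, h2, hj, hne, by split_ifs <;> first | exact (‹False›).elim | omega | (subst_vars; omega), by split_ifs <;> first | exact (‹False›).elim | omega | (subst_vars; omega)⟩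
    · exact Or.inr ⟨by split_ifs <;> first | exact (‹False›).elim | omega | (subst_vars; omega), i, h1, h2, by split_ifs <;> first | exact (‹False›).elim | omega | (subst_vars; omega)⟩

lemma badR (hm : 4 ≤ m) (d : Fin (m+2) →₀ ℕ) :
    Bad m (d + (Finsupp.single (aI m) 1 + Finsupp.single (bI m) 1)) ↔
      BadP m d ∨ MidP m d := by
  unfold Bad BadP MidP
  simp only [aI, bI, vOf_add, vOf_single]
  constructor
  · rintro (⟨i, j, h2, hj, hne, hi0, hj0⟩ | ⟨hT, i, h1, h2, hi⟩)
    · by_cases hi : i = 0 <;> by_cases hj' : j = m - 1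
      · exact absurd ⟨hi, hj'⟩ hne
      · -- i = 0, j ≠ m-1 : j is a middle variable with positive exponent
        have hj0' : 0 < vOf m d j := by split_ifs at hj0 <;> first | exact (‹False›).elim | omega
        exact Or.inr ⟨j, by omega, by omega, hj0'⟩
      · -- i ≠ 0, j = m-1 : i middle
        have hi0' : 0 < vOf m d i := by split_ifs at hi0 <;> first | exact (‹False›).elim | omega
        exact Or.inr ⟨i, by omega, by omega, hi0'⟩
      · have hi0' : 0 < vOf m d i := by split_ifs at hi0 <;> first | exact (‹False›).elim | omega
        have hj0' : 0 < vOf m d j := by split_ifs at hj0 <;> first | exact (‹False›).elim | omega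
        exact Or.inl ⟨i, j, h2, hj, hne, hi0', hj0'⟩
    · have hi' : 0 < vOf m d i := by split_ifs at hi <;> first | exact (‹False›).elim | omega
      exact Or.inr ⟨i, h1, h2, hi'⟩
  · rintro (⟨i, j, h2, hj, hne, hi0, hj0⟩ | ⟨i, h1, h2, hi⟩)
    · exact Or.inl ⟨i, j, h2, hj, hne, by split_ifs <;> first | exact (‹False›).elim | omega | (subst_vars; omega), by split_ifs <;> first | exact (‹False›).elim | omega | (subst_vars; omega)⟩
    · -- middle variable i ∈ [1, m-2] with positive exponent
      by_cases h1' : i = 1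
      · subst h1'
        refine Or.inl ⟨1, m - 1, by omega, by omega, by omega, ?_, ?_⟩
        · split_ifs <;> first | exact (‹False›).elim | omega | (subst_vars; omega)
        · split_ifs <;> first | exact (‹False›).elim | omega | (subst_vars; omega)
      · refine Or.inl ⟨0, i, by omega, by omega, by omega, ?_, ?_⟩
        · split_ifs <;> first | exact (‹False›).elim | omega | (subst_vars; omega)
        · split_ifs <;> first | exact (‹False›).elim | omega | (subst_vars; omega)

lemma eMin_L (hm : 4 ≤ m) (d : Fin (m+2) →₀ ℕ) :
    eMin m (d + (Finsupp.single (zI m) 1 + Finsupp.single (tI m) 1)) = eMin m d := by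
  unfold eMin
  simp only [zI, tI, vOf_add, vOf_single]
  split_ifs <;> first | exact (‹False›).elim | omega | (subst_vars; omega)

lemma eMin_R (hm : 4 ≤ m) (d : Fin (m+2) →₀ ℕ) :
    eMin m (d + (Finsupp.single (aI m) 1 + Finsupp.single (bI m) 1)) = eMin m d + 1 := by
  unfold eMin
  simp only [aI, bI, vOf_add, vOf_single]
  split_ifs <;> first | exact (‹False›).elim | omega | (subst_vars; omega)

lemma red_LR (hm : 4 ≤ m) (d : Fin (m+2) →₀ ℕ) :
    red m (d + (Finsupp.single (zI m) 1 + Finsupp.single (tI m) 1)) =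
      red m (d + (Finsupp.single (aI m) 1 + Finsupp.single (bI m) 1)) := by
  apply finsupp_ext
  intro t
  have hL := eMin_L m hm d
  have hR := eMin_R m hm d
  have h0 : eMin m d ≤ vOf m d 0 := min_le_left _ _
  have h1 : eMin m d ≤ vOf m d (m-1) := min_le_right _ _
  rw [vOf_red, vOf_red, hL, hR]
  simp only [zI, tI, aI, bI, vOf_add, vOf_single]
  split_ifs <;> first | exact (‹False›).elim | omega | (subst_vars; omega)

lemma nmono_bin (hm : 4 ≤ m) (d : Fin (m+2) →₀ ℕ) :
    nmono k m (d + (Finsupp.single (zI m) 1 + Finsupp.single (tI m) 1)) =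
      nmono k m (d + (Finsupp.single (aI m) 1 + Finsupp.single (bI m) 1)) := by
  unfold nmono
  by_cases hB : BadP m d ∨ MidP m d
  · rw [if_pos ((badL m hm d).mpr hB), if_pos ((badR m hm d).mpr hB)]
  · rw [if_neg (fun h => hB ((badL m hm d).mp h)), if_neg (fun h => hB ((badR m hm d).mp h)),
      red_LR m hm d]

lemma bad_zshift (hm : 4 ≤ m) (d : Fin (m+2) →₀ ℕ) :
    Bad m (Finsupp.single (zI m) 1 + d) ↔ Bad m d := by
  unfold Bad BadP MidP
  simp only [zI, vOf_add, vOf_single]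
  constructor
  · rintro (⟨i, j, h2, hj, hne, hi0, hj0⟩ | ⟨hT, i, h1, h2, hi⟩)
    · exact Or.inl ⟨i, j, h2, hj, hne, by split_ifs at hi0 <;> first | exact (‹False›).elim | omega,
        by split_ifs at hj0 <;> first | exact (‹False›).elim | omega⟩
    · exact Or.inr ⟨by split_ifs at hT <;> first | exact (‹False›).elim | omega, i, h1, h2, by split_ifs at hi <;> first | exact (‹False›).elim | omega⟩
  · rintro (⟨i, j, h2, hj, hne, hi0, hj0⟩ | ⟨hT, i, h1, h2, hi⟩)
    · exact Or.inl ⟨i, j, h2, hj, hne, by split_ifs <;> first | exact (‹False›).elim | omega | (subst_vars; omega), by split_ifs <;> first | exact (‹False›).elim | omega | (subst_vars; omega)⟩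
    · exact Or.inr ⟨by split_ifs <;> first | exact (‹False›).elim | omega | (subst_vars; omega), i, h1, h2, by split_ifs <;> first | exact (‹False›).elim | omega | (subst_vars; omega)⟩

lemma red_zshift (hm : 4 ≤ m) (d : Fin (m+2) →₀ ℕ) :
    red m (Finsupp.single (zI m) 1 + d) = Finsupp.single (zI m) 1 + red m d := by
  apply finsupp_ext
  intro t
  have he : eMin m (Finsupp.single (zI m) 1 + d) = eMin m d := by
    unfold eMin
    simp only [zI, vOf_add, vOf_single]
    split_ifs <;> first | exact (‹False›).elim | omega | (subst_vars; omega)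
  have h0 : eMin m d ≤ vOf m d 0 := min_le_left _ _
  have h1 : eMin m d ≤ vOf m d (m-1) := min_le_right _ _
  rw [vOf_add, vOf_red, vOf_red, he]
  simp only [zI, vOf_add, vOf_single]
  split_ifs <;> first | exact (‹False›).elim | omega | (subst_vars; omega)

lemma nmono_zshift (hm : 4 ≤ m) (d : Fin (m+2) →₀ ℕ) :
    nmono k m (Finsupp.single (zI m) 1 + d) = X (zI m) * nmono k m d := by
  unfold nmono
  by_cases hB : Bad m d
  · rw [if_pos ((bad_zshift m hm d).mpr hB), if_pos hB, mul_zero]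
  · rw [if_neg (fun h => hB ((bad_zshift m hm d).mp h)), if_neg hB, red_zshift m hm d]
    have hX : (X (zI m) : MvPolynomial (Fin (m+2)) k) = monomial (Finsupp.single (zI m) 1) 1 := by
      rw [← X_pow_eq_monomial, pow_one]
    rw [hX, monomial_mul, one_mul]

end Unproj

namespace Unproj
variable (k : Type*) [Field k] (m : ℕ)

lemma Xv_eq (n t : ℕ) (h1 : 1 ≤ t) (h2 : t ≤ n) (hlt : t - 1 < n) :
    Xv k n t = X ⟨t - 1, hlt⟩ := by
  rw [Xv, dif_pos ⟨h1, h2⟩]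

lemma X_as {σ : Type*} (s : σ) :
    (X s : MvPolynomial σ k) = monomial (Finsupp.single s 1) 1 := by
  rw [← X_pow_eq_monomial, pow_one]

lemma prod_two {σ : Type*} (f : ℕ → MvPolynomial σ k) :
    ∏ j ∈ Finset.range 2, f j = f 0 * f 1 := by
  rw [Finset.prod_range_succ, Finset.prod_range_one]

lemma mem_idealI_pair (n p q t0 t1 : ℕ) (h0 : p ≤ t0) (h1 : t1 ≤ q) (hg : t0 + 2 ≤ t1) :
    Xv k n t0 * Xv k n t1 ∈ idealI k n 2 p q := by
  apply Ideal.subset_span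
  refine ⟨fun j => if j = 0 then t0 else t1, by simpa, by simpa, ?_, ?_⟩
  · intro j hj
    have hj0 : j = 0 := by omega
    subst hj0
    simpa using by omega
  · rw [prod_two]
    norm_num

lemma mem_idealI_single (n p q t0 : ℕ) (h0 : p ≤ t0) (h1 : t0 ≤ q) :
    Xv k n t0 ∈ idealI k n 1 p q := by
  apply Ideal.subset_span
  refine ⟨fun _ => t0, by simpa, by simpa, ?_, ?_⟩
  · intro j hj; omega
  · rw [Finset.prod_range_one]

section WithQ
variable (hm : 4 ≤ m) (Q : Ideal (MvPolynomial (Fin (m + 2)) k))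
  (hQ : Q = idealI k (m + 2) 2 1 (m - 1) + idealI k (m + 2) 2 2 m +
      Ideal.span {Xv k (m + 2) (m + 2)} * idealI k (m + 2) 1 2 (m - 1) +
      Ideal.span {Xv k (m + 2) (m + 1) * Xv k (m + 2) (m + 2) -
        Xv k (m + 2) 1 * Xv k (m + 2) m})

include hm hQ

lemma memQ_pair (i j : ℕ) (h2 : i + 2 ≤ j) (hj : j ≤ m - 1) (hne : ¬(i = 0 ∧ j = m - 1)) :
    (X (⟨i, by omega⟩ : Fin (m+2)) * X (⟨j, by omega⟩ : Fin (m+2))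
      : MvPolynomial (Fin (m+2)) k) ∈ Q := by
  rw [hQ]
  simp only [Ideal.add_eq_sup]
  have e1 : Xv k (m+2) (i+1) = (X (⟨i, by omega⟩ : Fin (m+2)) : MvPolynomial (Fin (m+2)) k) :=
    Xv_eq k (m+2) (i+1) (by omega) (by omega) (by omega)
  have e2 : Xv k (m+2) (j+1) = (X (⟨j, by omega⟩ : Fin (m+2)) : MvPolynomial (Fin (m+2)) k) :=
    Xv_eq k (m+2) (j+1) (by omega) (by omega) (by omega)
  by_cases hc : j ≤ m - 2
  · refine Submodule.mem_sup_left (Submodule.mem_sup_left (Submodule.mem_sup_left ?_))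
    rw [← e1, ← e2]
    exact mem_idealI_pair k (m+2) 1 (m-1) (i+1) (j+1) (by omega) (by omega) (by omega)
  · -- j = m - 1, so i ≥ 1
    have hi1 : 1 ≤ i := by
      rcases Nat.eq_zero_or_pos i with h | h
      · exact absurd ⟨h, by omega⟩ hne
      · exact h
    refine Submodule.mem_sup_left (Submodule.mem_sup_left (Submodule.mem_sup_right ?_))
    rw [← e1, ← e2]
    exact mem_idealI_pair k (m+2) 2 m (i+1) (j+1) (by omega) (by omega) (by omega)

lemma memQ_T (i : ℕ) (h1 : 1 ≤ i) (h2 : i ≤ m - 2) :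
    (X (tI m) * X (⟨i, by omega⟩ : Fin (m+2)) : MvPolynomial (Fin (m+2)) k) ∈ Q := by
  rw [hQ]
  simp only [Ideal.add_eq_sup]
  refine Submodule.mem_sup_left (Submodule.mem_sup_right ?_)
  have e1 : Xv k (m+2) (m+2) = (X (tI m) : MvPolynomial (Fin (m+2)) k) :=
    Xv_eq k (m+2) (m+2) (by omega) (by omega) (by omega)
  have e2 : Xv k (m+2) (i+1) = (X (⟨i, by omega⟩ : Fin (m+2)) : MvPolynomial (Fin (m+2)) k) :=
    Xv_eq k (m+2) (i+1) (by omega) (by omega) (by omega)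
  rw [← e1, ← e2]
  exact Ideal.mul_mem_mul (Ideal.subset_span rfl)
    (mem_idealI_single k (m+2) 2 (m-1) (i+1) (by omega) (by omega))

lemma memQ_bin :
    (X (zI m) * X (tI m) - X (aI m) * X (bI m) : MvPolynomial (Fin (m+2)) k) ∈ Q := by
  rw [hQ]
  simp only [Ideal.add_eq_sup]
  refine Submodule.mem_sup_right (Ideal.subset_span ?_)
  have e1 : Xv k (m+2) (m+1) = (X (zI m) : MvPolynomial (Fin (m+2)) k) :=
    Xv_eq k (m+2) (m+1) (by omega) (by omega) (by omega)
  have e2 : Xv k (m+2) (m+2) = (X (tI m) : MvPolynomial (Fin (m+2)) k) :=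
    Xv_eq k (m+2) (m+2) (by omega) (by omega) (by omega)
  have e3 : Xv k (m+2) 1 = (X (aI m) : MvPolynomial (Fin (m+2)) k) :=
    Xv_eq k (m+2) 1 (by omega) (by omega) (by omega)
  have e4 : Xv k (m+2) m = (X (bI m) : MvPolynomial (Fin (m+2)) k) :=
    Xv_eq k (m+2) m (by omega) (by omega) (by omega)
  rw [← e1, ← e2, ← e3, ← e4]
  rfl


end WithQ

/-- the ideal of polynomials `f` such that `NF (g * f) = 0` for every `g` -/
noncomputable def Kid : Ideal (MvPolynomial (Fin (m+2)) k) where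
  carrier := {f | ∀ g, NF k m (g * f) = 0}
  add_mem' := fun {a b} ha hb g => by rw [mul_add, map_add, ha g, hb g, add_zero]
  zero_mem' := fun g => by rw [mul_zero, map_zero]
  smul_mem' := fun c f hf g => by rw [smul_eq_mul, ← mul_assoc]; exact hf (g * c)

lemma mem_Kid {f : MvPolynomial (Fin (m+2)) k} :
    f ∈ Kid k m ↔ ∀ g, NF k m (g * f) = 0 := Iff.rfl

lemma pair_Kid (hm : 4 ≤ m) (i j : ℕ) (h2 : i + 2 ≤ j) (hj : j ≤ m - 1)
    (hne : ¬(i = 0 ∧ j = m - 1)) :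
    (X (⟨i, by omega⟩ : Fin (m+2)) * X (⟨j, by omega⟩ : Fin (m+2))
      : MvPolynomial (Fin (m+2)) k) ∈ Kid k m := by
  rw [mem_Kid]
  intro g
  induction g using MvPolynomial.induction_on' with
  | add p q hp hq => rw [add_mul, map_add, hp, hq, add_zero]
  | monomial u c =>
    rw [X_as, X_as, monomial_mul, monomial_mul, NF_monomial]
    have hB : Bad m (u + (Finsupp.single (⟨i, by omega⟩ : Fin (m+2)) 1 +
        Finsupp.single (⟨j, by omega⟩ : Fin (m+2)) 1)) := by
      refine Or.inl ⟨i, j, h2, hj, hne, ?_, ?_⟩ <;>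
        simp only [vOf_add, vOf_single] <;> split_ifs <;> first | exact (‹False›).elim | omega | (subst_vars; omega)
    rw [nmono, if_pos hB, smul_zero]

lemma T_Kid (hm : 4 ≤ m) (i : ℕ) (h1 : 1 ≤ i) (h2 : i ≤ m - 2) :
    (X (tI m) * X (⟨i, by omega⟩ : Fin (m+2)) : MvPolynomial (Fin (m+2)) k) ∈ Kid k m := by
  rw [mem_Kid]
  intro g
  induction g using MvPolynomial.induction_on' with
  | add p q hp hq => rw [add_mul, map_add, hp, hq, add_zero]
  | monomial u c =>
    rw [X_as, X_as, monomial_mul, monomial_mul, NF_monomial]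
    have hB : Bad m (u + (Finsupp.single (tI m) 1 +
        Finsupp.single (⟨i, by omega⟩ : Fin (m+2)) 1)) := by
      refine Or.inr ⟨?_, i, h1, h2, ?_⟩ <;>
        simp only [tI, vOf_add, vOf_single] <;> split_ifs <;>
        first | exact (‹False›).elim | omega
    rw [nmono, if_pos hB, smul_zero]

lemma bin_Kid (hm : 4 ≤ m) :
    (X (zI m) * X (tI m) - X (aI m) * X (bI m) : MvPolynomial (Fin (m+2)) k) ∈ Kid k m := by
  rw [mem_Kid]
  intro g
  have hZT : (X (zI m) * X (tI m) : MvPolynomial (Fin (m+2)) k)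
      = monomial (Finsupp.single (zI m) 1 + Finsupp.single (tI m) 1) 1 := by
    rw [X_as, X_as, monomial_mul, one_mul]
  have hAB : (X (aI m) * X (bI m) : MvPolynomial (Fin (m+2)) k)
      = monomial (Finsupp.single (aI m) 1 + Finsupp.single (bI m) 1) 1 := by
    rw [X_as, X_as, monomial_mul, one_mul]
  induction g using MvPolynomial.induction_on' with
  | add p q hp hq => rw [add_mul, map_add, hp, hq, add_zero]
  | monomial u c =>
    rw [mul_sub, hZT, hAB, monomial_mul, monomial_mul, map_sub, NF_monomial, NF_monomial,
      nmono_bin k m hm u, sub_self]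

section WithQ2
variable (hm : 4 ≤ m) (Q : Ideal (MvPolynomial (Fin (m + 2)) k))
  (hQ : Q = idealI k (m + 2) 2 1 (m - 1) + idealI k (m + 2) 2 2 m +
      Ideal.span {Xv k (m + 2) (m + 2)} * idealI k (m + 2) 1 2 (m - 1) +
      Ideal.span {Xv k (m + 2) (m + 1) * Xv k (m + 2) (m + 2) -
        Xv k (m + 2) 1 * Xv k (m + 2) m})

include hm hQ

lemma Q_le_Kid : Q ≤ Kid k m := by
  rw [hQ]
  simp only [Ideal.add_eq_sup, sup_le_iff]
  refine ⟨⟨⟨?_, ?_⟩, ?_⟩, ?_⟩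
  · rw [idealI, Ideal.span_le]
    rintro f ⟨t, h0, h1, hg, rfl⟩
    rw [prod_two]
    have hgap : t 0 + 2 ≤ t 1 := hg 0 (by omega)
    have h1' : t 1 ≤ m - 1 := h1
    rw [Xv_eq k (m+2) (t 0) (by omega) (by omega) (by omega),
      Xv_eq k (m+2) (t 1) (by omega) (by omega) (by omega)]
    exact pair_Kid k m hm (t 0 - 1) (t 1 - 1) (by omega) (by omega) (by omega)
  · rw [idealI, Ideal.span_le]
    rintro f ⟨t, h0, h1, hg, rfl⟩
    rw [prod_two]
    have hgap : t 0 + 2 ≤ t 1 := hg 0 (by omega)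
    have h1' : t 1 ≤ m := h1
    rw [Xv_eq k (m+2) (t 0) (by omega) (by omega) (by omega),
      Xv_eq k (m+2) (t 1) (by omega) (by omega) (by omega)]
    exact pair_Kid k m hm (t 0 - 1) (t 1 - 1) (by omega) (by omega) (by omega)
  · rw [Ideal.mul_le]
    intro r hr s hs
    obtain ⟨u, rfl⟩ := Ideal.mem_span_singleton.mp hr
    have key : ∀ s ∈ idealI k (m+2) 1 2 (m-1), X (tI m) * s ∈ Kid k m := by
      intro s hs
      induction hs using Submodule.span_induction with
      | mem f hf =>
        obtain ⟨t, h0, h1, -, rfl⟩ := hf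
        rw [Finset.prod_range_one]
        have h1' : t 0 ≤ m - 1 := h1
        rw [Xv_eq k (m+2) (t 0) (by omega) (by omega) (by omega)]
        exact T_Kid k m hm (t 0 - 1) (by omega) (by omega)
      | zero => rw [mul_zero]; exact zero_mem _
      | add x y hx hy ihx ihy => rw [mul_add]; exact add_mem ihx ihy
      | smul a x hx ihx =>
        rw [smul_eq_mul, mul_left_comm]
        exact Ideal.mul_mem_left _ _ ihx
    have e1 : Xv k (m+2) (m+2) = (X (tI m) : MvPolynomial (Fin (m+2)) k) :=
      Xv_eq k (m+2) (m+2) (by omega) (by omega) (by omega)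
    rw [e1, mul_comm (X (tI m)) u, mul_assoc]
    exact Ideal.mul_mem_left _ _ (key s hs)
  · rw [Ideal.span_le, Set.singleton_subset_iff]
    have e1 : Xv k (m+2) (m+1) = (X (zI m) : MvPolynomial (Fin (m+2)) k) :=
      Xv_eq k (m+2) (m+1) (by omega) (by omega) (by omega)
    have e2 : Xv k (m+2) (m+2) = (X (tI m) : MvPolynomial (Fin (m+2)) k) :=
      Xv_eq k (m+2) (m+2) (by omega) (by omega) (by omega)
    have e3 : Xv k (m+2) 1 = (X (aI m) : MvPolynomial (Fin (m+2)) k) :=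
      Xv_eq k (m+2) 1 (by omega) (by omega) (by omega)
    have e4 : Xv k (m+2) m = (X (bI m) : MvPolynomial (Fin (m+2)) k) :=
      Xv_eq k (m+2) m (by omega) (by omega) (by omega)
    show _ ∈ Kid k m
    rw [e1, e2, e3, e4]
    exact bin_Kid k m hm


lemma NF_memQ {f : MvPolynomial (Fin (m+2)) k} (hf : f ∈ Q) : NF k m f = 0 := by
  have h := Q_le_Kid k m hm Q hQ hf 1
  rwa [one_mul] at h

lemma sub_NF_mem (f : MvPolynomial (Fin (m+2)) k) : f - NF k m f ∈ Q := by
  induction f using MvPolynomial.induction_on' with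
  | add p q hp hq =>
    rw [map_add]
    have h : p + q - (NF k m p + NF k m q) = (p - NF k m p) + (q - NF k m q) := by ring
    rw [h]; exact add_mem hp hq
  | monomial u c =>
    rw [NF_monomial, nmono]
    by_cases hB : Bad m u
    · rw [if_pos hB, smul_zero, sub_zero]
      rcases hB with ⟨i, j, h2, hj, hne, hi0, hj0⟩ | ⟨hT, i, h1, h2, hi⟩
      · have key : (monomial u c : MvPolynomial (Fin (m+2)) k) =
            monomial (u - Finsupp.single (⟨i, by omega⟩ : Fin (m+2)) 1
              - Finsupp.single (⟨j, by omega⟩ : Fin (m+2)) 1) c *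
            (X (⟨i, by omega⟩ : Fin (m+2)) * X (⟨j, by omega⟩ : Fin (m+2))) := by
          rw [X_as, X_as, monomial_mul, monomial_mul, mul_one, mul_one]
          congr 1
          congr 1
          apply finsupp_ext
          intro t
          have hi0' := hi0; have hj0' := hj0
          simp only [vOf_add, vOf_sub, vOf_single]
          split_ifs <;> first | exact (‹False›).elim | omega | (subst_vars; omega)
        rw [key]
        exact Ideal.mul_mem_left _ _ (memQ_pair k m hm Q hQ i j h2 hj hne)
      · have key : (monomial u c : MvPolynomial (Fin (m+2)) k) =
            monomial (u - Finsupp.single (tI m) 1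
              - Finsupp.single (⟨i, by omega⟩ : Fin (m+2)) 1) c *
            (X (tI m) * X (⟨i, by omega⟩ : Fin (m+2))) := by
          rw [X_as, X_as, monomial_mul, monomial_mul, mul_one, mul_one]
          congr 1
          congr 1
          apply finsupp_ext
          intro t
          have hT' := hT; have hi' := hi
          simp only [tI] at *
          simp only [vOf_add, vOf_sub, vOf_single]
          split_ifs <;> first | exact (‹False›).elim | omega | (subst_vars; omega)
        rw [key]
        exact Ideal.mul_mem_left _ _ (memQ_T k m hm Q hQ i h1 h2)
    · rw [if_neg hB]
      have h0 : eMin m u ≤ vOf m u 0 := min_le_left _ _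
      have h1 : eMin m u ≤ vOf m u (m-1) := min_le_right _ _
      set e := eMin m u with he
      set rest := u - Finsupp.single (aI m) e - Finsupp.single (bI m) e with hrest
      have hpowAB : ((X (aI m) * X (bI m)) ^ e : MvPolynomial (Fin (m+2)) k)
          = monomial (Finsupp.single (aI m) e + Finsupp.single (bI m) e) 1 := by
        rw [mul_pow, X_pow_eq_monomial, X_pow_eq_monomial, monomial_mul, one_mul]
      have hpowZT : ((X (zI m) * X (tI m)) ^ e : MvPolynomial (Fin (m+2)) k)
          = monomial (Finsupp.single (zI m) e + Finsupp.single (tI m) e) 1 := by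
        rw [mul_pow, X_pow_eq_monomial, X_pow_eq_monomial, monomial_mul, one_mul]
      have hd : (monomial u c : MvPolynomial (Fin (m+2)) k) =
          monomial rest c * (X (aI m) * X (bI m)) ^ e := by
        rw [hpowAB, monomial_mul, mul_one]
        congr 1
        congr 1
        apply finsupp_ext
        intro t
        simp only [hrest, aI, bI, vOf_add, vOf_sub, vOf_single]
        split_ifs <;> first | exact (‹False›).elim | omega | (subst_vars; omega)
      have hr : (monomial (red m u) 1 : MvPolynomial (Fin (m+2)) k) =
          monomial rest 1 * (X (zI m) * X (tI m)) ^ e := by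
        rw [hpowZT, monomial_mul, mul_one]
        congr 1
        congr 1
        apply finsupp_ext
        intro t
        rw [vOf_red]
        simp only [hrest, aI, bI, zI, tI, vOf_add, vOf_sub, vOf_single, ← he]
        split_ifs <;> first | exact (‹False›).elim | omega | (subst_vars; omega)
      rw [hd, hr]
      have hcollect : monomial rest c * (X (aI m) * X (bI m)) ^ e
            - c • (monomial rest 1 * (X (zI m) * X (tI m)) ^ e)
          = monomial rest c * ((X (aI m) * X (bI m)) ^ e - (X (zI m) * X (tI m)) ^ e) := by
        rw [mul_sub]
        congr 1
        rw [← smul_mul_assoc, smul_monomial, smul_eq_mul, mul_one]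
      rw [hcollect]
      apply Ideal.mul_mem_left
      obtain ⟨w, hw⟩ := sub_dvd_pow_sub_pow (X (aI m) * X (bI m) : MvPolynomial (Fin (m+2)) k)
        (X (zI m) * X (tI m)) e
      rw [hw]
      apply Ideal.mul_mem_right
      have hneg : (X (aI m) * X (bI m) - X (zI m) * X (tI m) : MvPolynomial (Fin (m+2)) k)
          = -(X (zI m) * X (tI m) - X (aI m) * X (bI m)) := (neg_sub _ _).symm
      rw [hneg]
      exact neg_mem (memQ_bin k m hm Q hQ)

omit hQ in
lemma NF_zmul (f : MvPolynomial (Fin (m+2)) k) :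
    NF k m (X (zI m) * f) = X (zI m) * NF k m f := by
  induction f using MvPolynomial.induction_on' with
  | add p q hp hq => rw [mul_add, map_add, map_add, hp, hq, mul_add]
  | monomial u c =>
    rw [X_as, monomial_mul, one_mul, NF_monomial, NF_monomial, nmono_zshift k m hm u, X_as,
      mul_smul_comm]

lemma part1 : Ideal.Quotient.mk Q (Xv k (m + 2) (m + 1)) ∈
    nonZeroDivisors (MvPolynomial (Fin (m + 2)) k ⧸ Q) := by
  have hXv : Xv k (m+2) (m+1) = (X (zI m) : MvPolynomial (Fin (m+2)) k) :=
    Xv_eq k (m+2) (m+1) (by omega) (by omega) (by omega)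
  rw [hXv, mem_nonZeroDivisors_iff_right]
  intro y hy
  obtain ⟨f, rfl⟩ := Ideal.Quotient.mk_surjective y
  rw [← map_mul, Ideal.Quotient.eq_zero_iff_mem] at hy
  have h1 : NF k m (X (zI m) * f) = 0 := by
    rw [mul_comm] at hy
    have h := Q_le_Kid k m hm Q hQ hy 1
    rwa [one_mul] at h
  rw [NF_zmul k m hm f] at h1
  have h2 : NF k m f = 0 := by
    rcases mul_eq_zero.mp h1 with h | h
    · exact absurd h (X_ne_zero _)
    · exact h
  rw [Ideal.Quotient.eq_zero_iff_mem]
  have h3 := sub_NF_mem k m hm Q hQ f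
  rwa [h2, sub_zero] at h3

end WithQ2

section Iso

/-- variable assignment for the map `k[x,z,T] → k[x_1..x_{m+1}]`: `x_i ↦ x_i`, `z ↦ 0`,
`T ↦ x_{m+1}` -/
noncomputable def gphi : Fin (m+2) → MvPolynomial (Fin (m+1)) k := fun i =>
  if h : (i : ℕ) < m then X ⟨(i : ℕ), by omega⟩
  else if (i : ℕ) = m then 0 else X ⟨m, by omega⟩

noncomputable def phi : MvPolynomial (Fin (m+2)) k →ₐ[k] MvPolynomial (Fin (m+1)) k :=
  aeval (gphi k m)

noncomputable def gpsi : Fin (m+1) → MvPolynomial (Fin (m+2)) k := fun j =>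
  if h : (j : ℕ) < m then X ⟨(j : ℕ), by omega⟩ else X (tI m)

noncomputable def psi : MvPolynomial (Fin (m+1)) k →ₐ[k] MvPolynomial (Fin (m+2)) k :=
  aeval (gpsi k m)

lemma phi_Xv (t : ℕ) (h1 : 1 ≤ t) (h2 : t ≤ m) :
    phi k m (Xv k (m+2) t) = Xv k (m+1) t := by
  rw [Xv_eq k (m+2) t h1 (by omega) (by omega), Xv_eq k (m+1) t h1 (by omega) (by omega),
    phi, aeval_X, gphi]
  rw [dif_pos (show ((⟨t-1, by omega⟩ : Fin (m+2)) : ℕ) < m by simpa using by omega)]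

lemma phi_z : phi k m (X (zI m)) = 0 := by
  rw [phi, aeval_X, gphi]
  rw [dif_neg (by simp [zI]), if_pos (by simp [zI])]

lemma phi_zv : phi k m (Xv k (m+2) (m+1)) = 0 := by
  rw [Xv_eq k (m+2) (m+1) (by omega) (by omega) (by omega)]
  exact phi_z k m

lemma phi_Tv : phi k m (Xv k (m+2) (m+2)) = Xv k (m+1) (m+1) := by
  rw [Xv_eq k (m+2) (m+2) (by omega) (by omega) (by omega),
    Xv_eq k (m+1) (m+1) (by omega) (by omega) (by omega), phi, aeval_X, gphi]
  rw [dif_neg (by simp [tI]), if_neg (by simp [tI])]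
  exact congrArg X (Fin.ext (by simp))

lemma psi_Xv (t : ℕ) (h1 : 1 ≤ t) (h2 : t ≤ m) :
    psi k m (Xv k (m+1) t) = Xv k (m+2) t := by
  rw [Xv_eq k (m+1) t h1 (by omega) (by omega), Xv_eq k (m+2) t h1 (by omega) (by omega),
    psi, aeval_X, gpsi]
  rw [dif_pos (show ((⟨t-1, by omega⟩ : Fin (m+1)) : ℕ) < m by simpa using by omega)]

lemma psi_topv : psi k m (Xv k (m+1) (m+1)) = X (tI m) := by
  rw [Xv_eq k (m+1) (m+1) (by omega) (by omega) (by omega), psi, aeval_X, gpsi]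
  rw [dif_neg (by simp)]

lemma phi_surj : Function.Surjective (phi k m) := by
  rw [← AlgHom.range_eq_top, ← top_le_iff, ← MvPolynomial.adjoin_range_X]
  apply Algebra.adjoin_le
  rintro _ ⟨j, rfl⟩
  by_cases hj : (j : ℕ) < m
  · have hval : phi k m (X (⟨(j : ℕ), by omega⟩ : Fin (m+2))) = X j := by
      rw [phi, aeval_X, gphi, dif_pos (by simpa using hj)]
      try exact congrArg X (Fin.ext rfl)
    exact ⟨_, hval⟩
  · have hj' : (j : ℕ) = m := by omega
    have hval : phi k m (X (tI m)) = X j := by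
      rw [phi, aeval_X, gphi, dif_neg (by simp [tI]), if_neg (by simp [tI])]
      try exact congrArg X (Fin.ext (by simp [hj']))
    exact ⟨_, hval⟩

lemma sub_endo_mem {σ : Type*} (I : Ideal (MvPolynomial σ k))
    (τ : MvPolynomial σ k →ₐ[k] MvPolynomial σ k)
    (h : ∀ i, τ (X i) - X i ∈ I) (f : MvPolynomial σ k) : τ f - f ∈ I := by
  induction f using MvPolynomial.induction_on with
  | C a =>
    have hC : τ (C a) = C a := by
      rw [← MvPolynomial.algebraMap_eq]; exact τ.commutes a
    rw [hC, sub_self]; exact zero_mem I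
  | add p q hp hq =>
    have hx : τ (p + q) - (p + q) = (τ p - p) + (τ q - q) := by rw [map_add]; ring
    rw [hx]; exact add_mem hp hq
  | mul_X p i hp =>
    have hx : τ (p * X i) - p * X i = τ p * (τ (X i) - X i) + (τ p - p) * X i := by
      rw [map_mul]; ring
    rw [hx]
    exact add_mem (Ideal.mul_mem_left _ _ (h i)) (Ideal.mul_mem_right _ _ hp)

section WithQ3
variable (hm : 4 ≤ m) (Q : Ideal (MvPolynomial (Fin (m + 2)) k))
  (hQ : Q = idealI k (m + 2) 2 1 (m - 1) + idealI k (m + 2) 2 2 m +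
      Ideal.span {Xv k (m + 2) (m + 2)} * idealI k (m + 2) 1 2 (m - 1) +
      Ideal.span {Xv k (m + 2) (m + 1) * Xv k (m + 2) (m + 2) -
        Xv k (m + 2) 1 * Xv k (m + 2) m})

include hm hQ

lemma phi_maps : Q ⊔ Ideal.span {X (zI m)} ≤
    Ideal.comap (phi k m) (idealI k (m + 1) 2 1 m + idealI k (m + 1) 2 2 (m + 1)) := by
  rw [Ideal.add_eq_sup]
  apply sup_le
  · rw [hQ]
    simp only [Ideal.add_eq_sup, sup_le_iff]
    refine ⟨⟨⟨?_, ?_⟩, ?_⟩, ?_⟩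
    · rw [idealI, Ideal.span_le]
      rintro f ⟨t, h0, h1, hg, rfl⟩
      have hgap : t 0 + 2 ≤ t 1 := hg 0 (by omega)
      have h1' : t 1 ≤ m - 1 := h1
      rw [SetLike.mem_coe, Ideal.mem_comap, prod_two, map_mul,
        phi_Xv k m (t 0) (by omega) (by omega), phi_Xv k m (t 1) (by omega) (by omega)]
      exact Submodule.mem_sup_left
        (mem_idealI_pair k (m+1) 1 m (t 0) (t 1) (by omega) (by omega) (by omega))
    · rw [idealI, Ideal.span_le]
      rintro f ⟨t, h0, h1, hg, rfl⟩
      have hgap : t 0 + 2 ≤ t 1 := hg 0 (by omega)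
      have h1' : t 1 ≤ m := h1
      rw [SetLike.mem_coe, Ideal.mem_comap, prod_two, map_mul,
        phi_Xv k m (t 0) (by omega) (by omega), phi_Xv k m (t 1) (by omega) (by omega)]
      exact Submodule.mem_sup_right
        (mem_idealI_pair k (m+1) 2 (m+1) (t 0) (t 1) (by omega) (by omega) (by omega))
    · rw [Ideal.mul_le]
      intro r hr s hs
      obtain ⟨u, rfl⟩ := Ideal.mem_span_singleton.mp hr
      have key : ∀ s ∈ idealI k (m+2) 1 2 (m-1),
          phi k m (Xv k (m+2) (m+2)) * phi k m s ∈
            idealI k (m + 1) 2 1 m ⊔ idealI k (m + 1) 2 2 (m + 1) := by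
        intro s hs
        induction hs using Submodule.span_induction with
        | mem f hf =>
          obtain ⟨t, h0, h1, -, rfl⟩ := hf
          rw [Finset.prod_range_one]
          have h1' : t 0 ≤ m - 1 := h1
          rw [phi_Tv, phi_Xv k m (t 0) (by omega) (by omega), mul_comm]
          exact Submodule.mem_sup_right
            (mem_idealI_pair k (m+1) 2 (m+1) (t 0) (m+1) (by omega) (by omega) (by omega))
        | zero => rw [map_zero, mul_zero]; exact zero_mem _
        | add x y hx hy ihx ihy => rw [map_add, mul_add]; exact add_mem ihx ihy
        | smul a x hx ihx =>
          rw [smul_eq_mul, map_mul, mul_left_comm]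
          exact Ideal.mul_mem_left _ _ ihx
      rw [Ideal.mem_comap, map_mul, map_mul, mul_right_comm]
      exact Ideal.mul_mem_right _ _ (key s hs)
    · rw [Ideal.span_le, Set.singleton_subset_iff]
      rw [SetLike.mem_coe, Ideal.mem_comap, map_sub, map_mul, map_mul, phi_zv, zero_mul,
        phi_Xv k m 1 (by omega) (by omega), phi_Xv k m m (by omega) (by omega), zero_sub]
      exact neg_mem (Submodule.mem_sup_left
        (mem_idealI_pair k (m+1) 1 m 1 m (by omega) (by omega) (by omega)))
  · rw [Ideal.span_le, Set.singleton_subset_iff, SetLike.mem_coe, Ideal.mem_comap, phi_z]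
    exact zero_mem _

lemma psi_maps : idealI k (m + 1) 2 1 m + idealI k (m + 1) 2 2 (m + 1) ≤
    Ideal.comap (psi k m) (Q ⊔ Ideal.span {X (zI m)}) := by
  rw [Ideal.add_eq_sup]
  apply sup_le
  · rw [idealI, Ideal.span_le]
    rintro f ⟨t, h0, h1, hg, rfl⟩
    have hgap : t 0 + 2 ≤ t 1 := hg 0 (by omega)
    have h1' : t 1 ≤ m := h1
    rw [SetLike.mem_coe, Ideal.mem_comap, prod_two, map_mul,
      psi_Xv k m (t 0) (by omega) (by omega), psi_Xv k m (t 1) (by omega) (by omega)]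
    by_cases hc : t 0 = 1 ∧ t 1 = m
    · obtain ⟨hc0, hc1⟩ := hc
      rw [hc0, hc1]
      have e3 : Xv k (m+2) 1 = (X (aI m) : MvPolynomial (Fin (m+2)) k) :=
        Xv_eq k (m+2) 1 (by omega) (by omega) (by omega)
      have e4 : Xv k (m+2) m = (X (bI m) : MvPolynomial (Fin (m+2)) k) :=
        Xv_eq k (m+2) m (by omega) (by omega) (by omega)
      rw [e3, e4]
      have hsplit : (X (aI m) * X (bI m) : MvPolynomial (Fin (m+2)) k) =
          X (zI m) * X (tI m) - (X (zI m) * X (tI m) - X (aI m) * X (bI m)) := by ring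
      rw [hsplit]
      refine sub_mem ?_ (Submodule.mem_sup_left (memQ_bin k m hm Q hQ))
      exact Submodule.mem_sup_right
        (Ideal.mul_mem_right _ _ (Ideal.subset_span rfl))
    · have hne : ¬(t 0 - 1 = 0 ∧ t 1 - 1 = m - 1) := by omega
      rw [Xv_eq k (m+2) (t 0) (by omega) (by omega) (by omega),
        Xv_eq k (m+2) (t 1) (by omega) (by omega) (by omega)]
      exact Submodule.mem_sup_left
        (memQ_pair k m hm Q hQ (t 0 - 1) (t 1 - 1) (by omega) (by omega) hne)
  · rw [idealI, Ideal.span_le]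
    rintro f ⟨t, h0, h1, hg, rfl⟩
    have hgap : t 0 + 2 ≤ t 1 := hg 0 (by omega)
    have h1' : t 1 ≤ m + 1 := h1
    rw [SetLike.mem_coe, Ideal.mem_comap, prod_two, map_mul]
    by_cases hc : t 1 ≤ m
    · rw [psi_Xv k m (t 0) (by omega) (by omega), psi_Xv k m (t 1) (by omega) (by omega),
        Xv_eq k (m+2) (t 0) (by omega) (by omega) (by omega),
        Xv_eq k (m+2) (t 1) (by omega) (by omega) (by omega)]
      exact Submodule.mem_sup_left
        (memQ_pair k m hm Q hQ (t 0 - 1) (t 1 - 1) (by omega) (by omega) (by omega))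
    · have hc1 : t 1 = m + 1 := by omega
      rw [hc1, psi_Xv k m (t 0) (by omega) (by omega), psi_topv,
        Xv_eq k (m+2) (t 0) (by omega) (by omega) (by omega), mul_comm]
      exact Submodule.mem_sup_left (memQ_T k m hm Q hQ (t 0 - 1) (by omega) (by omega))

lemma ker_eq : RingHom.ker ((Ideal.Quotient.mkₐ k
      (idealI k (m + 1) 2 1 m + idealI k (m + 1) 2 2 (m + 1))).comp (phi k m)) =
    Q ⊔ Ideal.span {X (zI m)} := by
  apply le_antisymm
  · intro f hf
    have hφ : phi k m f ∈ idealI k (m + 1) 2 1 m + idealI k (m + 1) 2 2 (m + 1) := by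
      rw [← Ideal.Quotient.eq_zero_iff_mem]
      have hf' := hf
      rw [RingHom.mem_ker] at hf'
      simpa using hf'
    have h1 : psi k m (phi k m f) ∈ Q ⊔ Ideal.span {X (zI m)} :=
      psi_maps k m hm Q hQ hφ
    have h2 : ((psi k m).comp (phi k m)) f - f ∈ Ideal.span {X (zI m)} := by
      apply sub_endo_mem
      intro i
      rcases lt_trichotomy (i : ℕ) m with hi | hi | hi
      · have : ((psi k m).comp (phi k m)) (X i) = X i := by
          rw [AlgHom.comp_apply, phi, aeval_X, gphi, dif_pos (by omega), psi, aeval_X, gpsi,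
            dif_pos (by simpa using hi)]
          try exact congrArg X (Fin.ext rfl)
        rw [this, sub_self]; exact zero_mem _
      · have : ((psi k m).comp (phi k m)) (X i) = 0 := by
          rw [AlgHom.comp_apply, phi, aeval_X, gphi, dif_neg (by omega), if_pos hi, map_zero]
        rw [this, zero_sub]
        refine neg_mem (Ideal.subset_span ?_)
        have : i = zI m := Fin.ext (by simpa [zI] using hi)
        rw [this]; rfl
      · have hi' : (i : ℕ) = m + 1 := by omega
        have : ((psi k m).comp (phi k m)) (X i) = X i := by
          rw [AlgHom.comp_apply, phi, aeval_X, gphi, dif_neg (by omega), if_neg (by omega),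
            psi, aeval_X, gpsi, dif_neg (by simp)]
          try exact congrArg X (Fin.ext (by simp [tI, hi']))
        rw [this, sub_self]; exact zero_mem _
    have h3 : f = psi k m (phi k m f) - (((psi k m).comp (phi k m)) f - f) := by
      rw [AlgHom.comp_apply]; ring
    rw [h3]
    exact sub_mem h1 (Submodule.mem_sup_right h2)
  · intro f hf
    rw [RingHom.mem_ker, AlgHom.comp_apply, Ideal.Quotient.mkₐ_eq_mk,
      Ideal.Quotient.eq_zero_iff_mem]
    exact phi_maps k m hm Q hQ hf

lemma part2 : Nonempty (((MvPolynomial (Fin (m + 2)) k ⧸ Q) ⧸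
      Ideal.span {Ideal.Quotient.mk Q (Xv k (m + 2) (m + 1))}) ≃ₐ[k]
    (MvPolynomial (Fin (m + 1)) k ⧸
      (idealI k (m + 1) 2 1 m + idealI k (m + 1) 2 2 (m + 1)))) := by
  have hXz : Xv k (m+2) (m+1) = (X (zI m) : MvPolynomial (Fin (m+2)) k) :=
    Xv_eq k (m+2) (m+1) (by omega) (by omega) (by omega)
  have heq1 : Ideal.span {Ideal.Quotient.mk Q (Xv k (m + 2) (m + 1))} =
      Ideal.map (Ideal.Quotient.mkₐ k Q) (Ideal.span {X (zI m)}) := by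
    rw [Ideal.map_span, Set.image_singleton, Ideal.Quotient.mkₐ_eq_mk, hXz]
  have hsurj : Function.Surjective ((Ideal.Quotient.mkₐ k
      (idealI k (m + 1) 2 1 m + idealI k (m + 1) 2 2 (m + 1))).comp (phi k m)) :=
    (Ideal.Quotient.mkₐ_surjective k _).comp (phi_surj k m)
  exact ⟨(Ideal.quotientEquivAlgOfEq k heq1).trans
    ((DoubleQuot.quotQuotEquivQuotSupₐ k Q (Ideal.span {X (zI m)})).trans
      ((Ideal.quotientEquivAlgOfEq k (ker_eq k m hm Q hQ).symm).trans
        (Ideal.quotientKerAlgEquivOfSurjective hsurj)))⟩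

end WithQ3
end Iso
end Unproj

/-- Unprojection for `d = 2`. Let `m ≥ 4`. In `k[x_1,…,x_m,z,T]` (with `z, T` the last two
variables) let `Q = I_{2,1,m−1} + I_{2,2,m} + (T x_2, …, T x_{m−1}) + (zT − x_1 x_m)` and
`S = k[x_1,…,x_m,z,T]/Q`. Then the image of `z` in `S` is a non-zero-divisor, and
`S/(z) ≅ k[x_1,…,x_{m+1}]/(I_{2,1,m} + I_{2,2,m+1}) = k[Δ(2,m+1)]` as `k`-algebras. -/
theorem unprojection_cyclic_two (k : Type*) [Field k] (m : ℕ) (hm : 4 ≤ m)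
    (Q : Ideal (MvPolynomial (Fin (m + 2)) k))
    (hQ : Q = idealI k (m + 2) 2 1 (m - 1) + idealI k (m + 2) 2 2 m +
      Ideal.span {Xv k (m + 2) (m + 2)} * idealI k (m + 2) 1 2 (m - 1) +
      Ideal.span {Xv k (m + 2) (m + 1) * Xv k (m + 2) (m + 2) -
        Xv k (m + 2) 1 * Xv k (m + 2) m}) :
    Ideal.Quotient.mk Q (Xv k (m + 2) (m + 1)) ∈
      nonZeroDivisors (MvPolynomial (Fin (m + 2)) k ⧸ Q) ∧
    Nonempty (((MvPolynomial (Fin (m + 2)) k ⧸ Q) ⧸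
        Ideal.span {Ideal.Quotient.mk Q (Xv k (m + 2) (m + 1))}) ≃ₐ[k]
      (MvPolynomial (Fin (m + 1)) k ⧸
        (idealI k (m + 1) 2 1 m + idealI k (m + 1) 2 2 (m + 1)))) :=
  ⟨Unproj.part1 k m hm Q hQ, Unproj.part2 k m hm Q hQ⟩
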